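/- arXiv:1708.07373 — 3 statements merged into one kernel-verified Lean document; each statement's English description precedes it below -/
import Mathlib

section
/- Every bounded set A ⊆ ℝ^n is contained in a closed ball of radius diam(A)/√2. -/
open Metric

noncomputable section

abbrev Euc (d : ℕ) := EuclideanSpace ℝ (Fin d)

def Spherical {d : ℕ} (A : Set (Euc d)) : Prop :=
  ∃ (c : Euc d) (ρ : ℝ), A ⊆ Metric.sphere c ρ

noncomputable def circumradius {d : ℕ} (A : Set (Euc d)) : ℝ :=
  sInf {ρ : ℝ | ∃ c : Euc d, A ⊆ Metric.closedBall c ρ}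

def EucCongruent {d D : ℕ} (A : Set (Euc d)) (A' : Set (Euc D)) : Prop :=
  ∃ f : Euc d → Euc D, Isometry f ∧ f '' A = A'

def DiameterRamsey {d : ℕ} (A : Set (Euc d)) : Prop :=
  ∀ r : ℕ, 0 < r → ∃ (n : ℕ) (B : Set (Euc n)), B.Finite ∧
    Metric.diam B = Metric.diam A ∧
    ∀ χ : Euc n → Fin r, ∃ A' : Set (Euc n), A' ⊆ B ∧ EucCongruent A A' ∧
      ∀ x ∈ A', ∀ y ∈ A', χ x = χ y

open Finset in
lemma finite_jung {E : Type*} [NormedAddCommGroup E] [InnerProductSpace ℝ E] {ι : Type*} [Fintype ι] [Nonempty ι] [DecidableEq ι]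
    (p : ι → E) (D : ℝ) (hD : ∀ i j, dist (p i) (p j) ≤ D) :
    ∃ c : E, ∀ i, dist (p i) c ≤ D / Real.sqrt 2 := by
  have hD0 : 0 ≤ D := le_trans dist_nonneg (hD (Classical.arbitrary ι) (Classical.arbitrary ι))
  set F : (ι → ℝ) → ℝ := fun l => (∑ i, l i * ‖p i‖ ^ 2) - ‖∑ i, l i • p i‖ ^ 2 with hF
  have hcont : ContinuousOn F (stdSimplex ℝ ι) := by
    apply Continuous.continuousOn
    apply Continuous.sub
    · exact continuous_finset_sum _ fun i _ => (continuous_apply i).mul continuous_const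
    · exact ((continuous_finset_sum _ fun i _ => (continuous_apply i).smul continuous_const).norm).pow 2
  have hne : (stdSimplex ℝ ι).Nonempty :=
    ⟨_, ite_eq_mem_stdSimplex ℝ (Classical.arbitrary ι)⟩
  obtain ⟨l, hl, hmax⟩ := (isCompact_stdSimplex ℝ ι).exists_isMaxOn hne hcont
  have hnn : ∀ i, 0 ≤ l i := hl.1
  have hone : ∑ i, l i = 1 := hl.2
  set c : E := ∑ i, l i • p i with hc
  have hinner : ∀ x : E, (inner ℝ c x : ℝ) = ∑ i, l i * inner ℝ (p i) x := by
    intro x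
    rw [hc, sum_inner]
    exact Finset.sum_congr rfl fun i _ => real_inner_smul_left _ _ _
  -- Key B : F l ≤ D^2/2
  have keyB : F l ≤ D ^ 2 / 2 := by
    have expand : ∑ i, ∑ k, l i * l k * ‖p i - p k‖ ^ 2 = 2 * F l := by
      have e1 : ∀ i k, l i * l k * ‖p i - p k‖ ^ 2
          = l i * l k * ‖p i‖ ^ 2 + l i * l k * ‖p k‖ ^ 2
            - 2 * (l i * (l k * inner ℝ (p i) (p k)))  := by
        intro i k; rw [norm_sub_sq_real]; ring
      simp only [e1, Finset.sum_sub_distrib, Finset.sum_add_distrib]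
      have h1 : ∑ i, ∑ k, l i * l k * ‖p i‖ ^ 2 = ∑ i, l i * ‖p i‖ ^ 2 := by
        refine Finset.sum_congr rfl fun i _ => ?_
        rw [show (fun k => l i * l k * ‖p i‖^2) = (fun k => (l i * ‖p i‖^2) * l k) from
          funext fun k => by ring, ← Finset.mul_sum, hone, mul_one]
      have h2 : ∑ i, ∑ k, l i * l k * ‖p k‖ ^ 2 = ∑ k, l k * ‖p k‖ ^ 2 := by
        rw [Finset.sum_comm]
        refine Finset.sum_congr rfl fun k _ => ?_
        rw [show (fun i => l i * l k * ‖p k‖^2) = (fun i => (l k * ‖p k‖^2) * l i) from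
          funext fun i => by ring, ← Finset.mul_sum, hone, mul_one]
      have h3 : ∑ i, ∑ k, 2 * (l i * (l k * inner ℝ (p i) (p k))) = 2 * ‖c‖ ^ 2 := by
        rw [← real_inner_self_eq_norm_sq, hinner]
        simp only [hc, inner_sum, real_inner_smul_right, Finset.mul_sum]
      rw [h1, h2, h3, hF]
      ring
    have bound : ∑ i, ∑ k, l i * l k * ‖p i - p k‖ ^ 2 ≤ D ^ 2 := by
      calc ∑ i, ∑ k, l i * l k * ‖p i - p k‖ ^ 2
          ≤ ∑ i, ∑ k, l i * l k * D ^ 2 := by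
            refine Finset.sum_le_sum fun i _ => Finset.sum_le_sum fun k _ => ?_
            refine mul_le_mul_of_nonneg_left ?_ (mul_nonneg (hnn i) (hnn k))
            rw [← dist_eq_norm]
            exact pow_le_pow_left₀ dist_nonneg (hD i k) 2
        _ = D ^ 2 := by
            have hrow : ∀ i, ∑ k, l i * l k * D ^ 2 = l i * D ^ 2 := by
              intro i
              rw [show (fun k => l i * l k * D^2) = (fun k => (l i * D^2) * l k) from
                funext fun k => by ring, ← Finset.mul_sum, hone, mul_one]
            rw [Finset.sum_congr rfl fun i _ => hrow i,
              show (fun i => l i * D^2) = (fun i => D^2 * l i) from funext fun i => by ring,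
              ← Finset.mul_sum, hone, mul_one]
    have h2F : 2 * F l ≤ D ^ 2 := expand ▸ bound
    clear_value F c
    linarith
  -- F l is nonnegative
  have hF0 : 0 ≤ F l := by
    have h1 := hmax (ite_eq_mem_stdSimplex ℝ (Classical.arbitrary ι))
    have h2 : F (fun x => if Classical.arbitrary ι = x then 1 else 0) = 0 := by
      rw [hF]
      simp [ite_mul, ite_smul, Finset.sum_ite_eq]
    have h1' : F (fun x => if Classical.arbitrary ι = x then 1 else 0) ≤ F l := h1
    rw [h2] at h1'
    exact h1'
  -- Key A : every point of the family is within sqrt (F l) of c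
  have keyA : ∀ j, ‖p j - c‖ ^ 2 ≤ F l := by
    intro j
    set ej : ι → ℝ := fun x => if j = x then 1 else 0 with hej
    have hejmem : ej ∈ stdSimplex ℝ ι := ite_eq_mem_stdSimplex ℝ j
    have hsum_ej_norm : ∑ k, ej k * ‖p k‖ ^ 2 = ‖p j‖ ^ 2 := by
      simp [hej, ite_mul, Finset.sum_ite_eq]
    have hsum_ej_smul : ∑ k, ej k • p k = p j := by
      simp [hej, ite_smul, Finset.sum_ite_eq]
    have hFval : ∀ t : ℝ, F ((1 - t) • l + t • ej)
        = F l + t * (‖p j - c‖ ^ 2 - F l) - t ^ 2 * ‖p j - c‖ ^ 2 := by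
      intro t
      have hs1 : ∑ k, ((1 - t) • l + t • ej) k * ‖p k‖ ^ 2
          = (1 - t) * (∑ k, l k * ‖p k‖ ^ 2) + t * ‖p j‖ ^ 2 := by
        have e : ∀ k, ((1 - t) • l + t • ej) k * ‖p k‖ ^ 2
            = (1 - t) * (l k * ‖p k‖ ^ 2) + t * (ej k * ‖p k‖ ^ 2) := by
          intro k
          simp only [Pi.add_apply, Pi.smul_apply, smul_eq_mul]
          ring
        rw [Finset.sum_congr rfl fun k _ => e k, Finset.sum_add_distrib,
          ← Finset.mul_sum, ← Finset.mul_sum, hsum_ej_norm]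
      have hs2 : ∑ k, ((1 - t) • l + t • ej) k • p k = c + t • (p j - c) := by
        have e : ∀ k, ((1 - t) • l + t • ej) k • p k
            = (1 - t) • (l k • p k) + t • (ej k • p k) := by
          intro k
          simp only [Pi.add_apply, Pi.smul_apply, smul_eq_mul, add_smul, mul_smul]
        rw [Finset.sum_congr rfl fun k _ => e k, Finset.sum_add_distrib,
          ← Finset.smul_sum, ← Finset.smul_sum, hsum_ej_smul, ← hc,
          smul_sub, sub_smul, one_smul]
        abel
      have hxpand : ‖c + t • (p j - c)‖ ^ 2
          = ‖c‖ ^ 2 + 2 * (t * inner ℝ c (p j - c)) + t ^ 2 * ‖p j - c‖ ^ 2 := by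
        rw [norm_add_sq_real, real_inner_smul_right, norm_smul]
        simp only [Real.norm_eq_abs, mul_pow, sq_abs]
      have e1 : ‖p j - c‖ ^ 2 = ‖p j‖ ^ 2 - 2 * inner ℝ (p j) c + ‖c‖ ^ 2 :=
        norm_sub_sq_real _ _
      have e2 : (inner ℝ c (p j - c) : ℝ) = inner ℝ (p j) c - ‖c‖ ^ 2 := by
        rw [inner_sub_right, real_inner_self_eq_norm_sq, real_inner_comm]
      simp only [hF]
      rw [hs1, hs2, hxpand, ← hc]
      linear_combination (-2*t) * e2 - t * e1
    have hineq : ∀ t : ℝ, 0 ≤ t → t ≤ 1 →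
        t * (‖p j - c‖ ^ 2 - F l) ≤ t ^ 2 * ‖p j - c‖ ^ 2 := by
      intro t h0 h1t
      have hmem := (convex_stdSimplex ℝ ι) hl hejmem (a := 1 - t) (b := t)
        (by linarith) h0 (by ring)
      have hle : F ((1 - t) • l + t • ej) ≤ F l := hmax hmem
      rw [hFval t] at hle
      linarith
    by_contra hcon
    push_neg at hcon
    have hQpos : 0 < ‖p j - c‖ ^ 2 := lt_of_le_of_lt hF0 hcon
    have key := hineq ((‖p j - c‖ ^ 2 - F l) / (2 * ‖p j - c‖ ^ 2))
      (div_nonneg (by linarith) (by linarith))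
      (by rw [div_le_one (by linarith)]; linarith)
    clear_value F c
    generalize hq : ‖p j - c‖ ^ 2 = q at *
    generalize hf : F l = f at *
    have hd : 0 < q - f := by linarith
    have h2q : (0:ℝ) < 2 * q := by linarith
    rw [div_pow, div_mul_eq_mul_div, div_mul_eq_mul_div,
      div_le_div_iff₀ h2q (by positivity)] at key
    nlinarith [key, mul_pos (mul_pos hd hd) (mul_pos hQpos hQpos)]
  refine ⟨c, fun i => ?_⟩
  rw [dist_eq_norm]
  have h1 : ‖p i - c‖ ^ 2 ≤ D ^ 2 / 2 := le_trans (keyA i) keyB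
  have h2 : (D / Real.sqrt 2) ^ 2 = D ^ 2 / 2 := by
    rw [div_pow, Real.sq_sqrt (by norm_num : (0:ℝ) ≤ 2)]
  have h3 : 0 ≤ D / Real.sqrt 2 := div_nonneg hD0 (Real.sqrt_nonneg 2)
  calc ‖p i - c‖ = Real.sqrt (‖p i - c‖ ^ 2) := (Real.sqrt_sq (norm_nonneg _)).symm
    _ ≤ Real.sqrt ((D / Real.sqrt 2) ^ 2) := Real.sqrt_le_sqrt (by rw [h2]; exact h1)
    _ = D / Real.sqrt 2 := Real.sqrt_sq h3

theorem stmt5 {n : ℕ} (A : Set (Euc n)) (hA : Bornology.IsBounded A) :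
    ∃ c : Euc n, A ⊆ Metric.closedBall c (Metric.diam A / Real.sqrt 2) := by
  classical
  rcases A.eq_empty_or_nonempty with h | ⟨x0, hx0⟩
  · exact ⟨0, by simp [h]⟩
  · set r := Metric.diam A / Real.sqrt 2 with hr
    have hfin : ∀ u : Finset A,
        (closedBall (x0 : Euc n) r ∩ ⋂ i ∈ u, closedBall (i : Euc n) r).Nonempty := by
      intro u
      set p : Option {i // i ∈ u} → Euc n := fun o => o.elim x0 (fun i => (i.1 : Euc n)) with hp
      have hmem : ∀ o, p o ∈ A := by
        rintro (_ | ⟨⟨⟨x, hx⟩, hu⟩⟩)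
        · exact hx0
        · exact hx
      have hD : ∀ i j, dist (p i) (p j) ≤ Metric.diam A := fun i j =>
        dist_le_diam_of_mem hA (hmem i) (hmem j)
      obtain ⟨c, hc⟩ := finite_jung p (Metric.diam A) hD
      refine ⟨c, ?_, ?_⟩
      · rw [mem_closedBall, dist_comm]
        exact hc none
      · simp only [Set.mem_iInter]
        intro i hi
        rw [mem_closedBall, dist_comm]
        exact hc (some ⟨i, hi⟩)
    obtain ⟨c, -, hc2⟩ := (isCompact_closedBall (x0 : Euc n) r).inter_iInter_nonempty
      (fun i : A => closedBall (i : Euc n) r) (fun i => isClosed_closedBall) hfin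
    refine ⟨c, fun x hx => ?_⟩
    rw [mem_closedBall, dist_comm]
    exact Set.mem_iInter.1 hc2 ⟨x, hx⟩
end
end

section
/- A triangle in the Euclidean plane having an angle strictly greater than 135° (3π/4 radians) is not diameter-Ramsey. -/
open Metric

open RealInnerProductSpace

noncomputable section

lemma psd_det_nonneg {m : Type*} [Fintype m] [DecidableEq m] {M : Matrix m m ℝ}
    (h : M.PosSemidef) : 0 ≤ M.det := by
  rw [h.1.det_eq_prod_eigenvalues]
  exact Finset.prod_nonneg fun i _ => by simpa using h.eigenvalues_nonneg i

lemma gram3 {n : ℕ} (u v w : Fin n → ℝ) :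
    0 ≤ (∑ i, u i*u i)*(∑ i, v i*v i)*(∑ i, w i*w i)
       + 2*((∑ i, u i*v i)*(∑ i, u i*w i)*(∑ i, v i*w i))
       - (∑ i, u i*u i)*(∑ i, v i*w i)^2 - (∑ i, v i*v i)*(∑ i, u i*w i)^2
       - (∑ i, w i*w i)*(∑ i, u i*v i)^2 := by
  have h := psd_det_nonneg (Matrix.posSemidef_self_mul_conjTranspose (Matrix.of ![u, v, w]))
  rw [Matrix.det_fin_three] at h
  simp only [Matrix.mul_apply, Matrix.conjTranspose_apply, Matrix.of_apply, Matrix.cons_val',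
    Matrix.cons_val_zero, Matrix.cons_val_one, Matrix.head_cons, Matrix.cons_val_two,
    Matrix.tail_cons, Matrix.cons_val_fin_one, Matrix.empty_val', Matrix.head_fin_const,
    star_trivial] at h
  have e1 : ∑ x, w x * v x = ∑ i, v i * w i := by simp [mul_comm]
  have e2 : ∑ x, v x * u x = ∑ i, u i * v i := by simp [mul_comm]
  have e3 : ∑ x, w x * u x = ∑ i, u i * w i := by simp [mul_comm]
  rw [e1, e2, e3] at h
  refine le_trans h (le_of_eq ?_)
  ring


set_option maxHeartbeats 1000000 in
/-- Core algebraic fact: the Gram determinant is negative. -/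
lemma core_neg (A B C x1 x2 x3 d K : ℝ)
    (hA0 : 0 < A) (hB0 : 0 < B) (hC0 : 0 < C)
    (hKdef : K = A + C - B)
    (hKneg : K < 0) (hK2 : 2*(A*C) < K^2) (hK4 : K^2 ≤ 4*(A*C))
    (hx3 : 0 ≤ x3)
    (hx3b : x3 ≤ B/2)
    (he1a : -d ≤ x1 - x3) (he1b : x1 - x3 ≤ d)
    (he2a : -d ≤ x2 - x3) (he2b : x2 - x3 ≤ d)
    (hd1 : d ≤ B) (hd2 : 32*B*d ≤ K^2 - 2*(A*C)) :
    x1*x2*x3 + 2*(((x1+x2-C)/2)*((x1+x3-B)/2)*((x2+x3-A)/2))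
      - x1*((x2+x3-A)/2)^2 - x2*((x1+x3-B)/2)^2 - x3*((x1+x2-C)/2)^2 < 0 := by
  have hd0 : 0 ≤ d := by linarith
  have hAB : A < B := by linarith
  have hCB : C < B := by linarith
  have hid : 4*(x1*x2*x3 + 2*(((x1+x2-C)/2)*((x1+x3-B)/2)*((x2+x3-A)/2))
      - x1*((x2+x3-A)/2)^2 - x2*((x1+x3-B)/2)^2 - x3*((x1+x2-C)/2)^2)
      = -(A*B*C) + x3*(4*(A*C) - K^2) + (x2-x3)*B*K - B*(x2-x3)^2
        + (x1-x3)*(A*(C+B-A)) - A*(x1-x3)^2 + (x1-x3)*(x2-x3)*(A+B-C) := by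
    rw [hKdef]; ring
  have hT1 : x3*(4*(A*C) - K^2) ≤ (B/2)*(4*(A*C) - K^2) := by
    nlinarith [mul_nonneg (by linarith : (0:ℝ) ≤ B/2 - x3) (by linarith : (0:ℝ) ≤ 4*(A*C) - K^2)]
  have hT2 : (x2-x3)*B*K ≤ d*B^2 := by
    nlinarith [mul_nonneg (mul_nonneg (by linarith : (0:ℝ) ≤ (x2-x3) + d) hB0.le)
        (by linarith : (0:ℝ) ≤ -K),
      mul_nonneg (mul_nonneg hd0 hB0.le) (by linarith : (0:ℝ) ≤ B + K)]
  have hT3 : -(B*(x2-x3)^2) ≤ 0 := by nlinarith [sq_nonneg (x2-x3)]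
  have hT4 : (x1-x3)*(A*(C+B-A)) ≤ 2*(d*B^2) := by
    nlinarith [mul_nonneg (by linarith : (0:ℝ) ≤ d - (x1-x3))
        (by nlinarith : (0:ℝ) ≤ A*(C+B-A)),
      mul_nonneg hd0 (by nlinarith : (0:ℝ) ≤ (B-A)*(C+B-A)),
      mul_nonneg hd0 (by nlinarith : (0:ℝ) ≤ B*(B - C + A))]
  have hT5 : -(A*(x1-x3)^2) ≤ 0 := by nlinarith [sq_nonneg (x1-x3)]
  have hT6 : (x1-x3)*(x2-x3)*(A+B-C) ≤ 2*(d*B^2) := by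
    have habs : (x1-x3)*(x2-x3) ≤ d^2 := by nlinarith
    have hdb : d^2 ≤ d*B := by nlinarith
    nlinarith [mul_nonneg (by linarith : (0:ℝ) ≤ d*B - (x1-x3)*(x2-x3))
        (by linarith : (0:ℝ) ≤ A+B-C),
      mul_nonneg (mul_nonneg hd0 hB0.le) (by linarith : (0:ℝ) ≤ B - A + C)]
  have h5 : 5*(d*B^2) ≤ (5/32)*(B*(K^2 - 2*(A*C))) := by
    nlinarith [mul_le_mul_of_nonneg_left hd2 (by linarith : (0:ℝ) ≤ B)]
  have hpos : 0 < B*(K^2 - 2*(A*C)) := mul_pos hB0 (by linarith)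
  linarith [hid, hT1, hT2, hT3, hT4, hT5, hT6, h5, hpos]

open Finset in

set_option maxHeartbeats 1000000 in
/-- Weak Jung: a finite set of diameter ≤ D lies in a closed ball of radius D/√2. -/
lemma jung_weak {n : ℕ} (F : Finset (EuclideanSpace ℝ (Fin n))) (hne : F.Nonempty) (D : ℝ)
    (hD : ∀ x ∈ F, ∀ y ∈ F, dist x y ≤ D) :
    ∃ c : EuclideanSpace ℝ (Fin n), ∀ x ∈ F, dist x c ^ 2 ≤ D ^ 2 / 2 := by
  classical
  set f : EuclideanSpace ℝ (Fin n) → ℝ := fun z => F.sup' hne fun x => dist x z with hf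
  have hfle : ∀ z : EuclideanSpace ℝ (Fin n), ∀ x ∈ F, dist x z ≤ f z := fun z x hx => Finset.le_sup' (fun y => dist y z) hx
  have hfcont : Continuous f := by
    rw [continuous_iff_continuousAt]
    intro z
    exact ContinuousAt.finset_sup'_apply
      (f := fun (x z : EuclideanSpace ℝ (Fin n)) => dist x z) hne
      (fun x _ => (continuous_const.dist continuous_id).continuousAt)
  obtain ⟨x₀, hx₀⟩ := id hne
  have hf0 : 0 ≤ f x₀ := le_trans dist_nonneg (hfle x₀ x₀ hx₀)
  have hx₀K : x₀ ∈ Metric.closedBall x₀ (2*f x₀ + 1) := by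
    simp only [Metric.mem_closedBall, dist_self]; linarith
  obtain ⟨c₀, hc₀K, hc₀min⟩ := (isCompact_closedBall x₀ (2*f x₀+1)).exists_isMinOn
    ⟨x₀, hx₀K⟩ hfcont.continuousOn
  have hglob : ∀ z, f c₀ ≤ f z := by
    intro z
    by_cases hz : z ∈ Metric.closedBall x₀ (2*f x₀+1)
    · exact hc₀min hz
    · have h1 : f c₀ ≤ f x₀ := hc₀min hx₀K
      have h2 : dist x₀ z ≤ f z := hfle z x₀ hx₀
      have h3 : 2*f x₀ + 1 < dist z x₀ := by
        simpa [Metric.mem_closedBall] using hz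
      rw [dist_comm] at h3
      linarith
  set ρ := f c₀ with hρ
  have hρ0 : 0 ≤ ρ := le_trans dist_nonneg (hfle c₀ x₀ hx₀)
  have hρ2 : ρ^2 ≤ D^2/2 := by
    set S : Finset (EuclideanSpace ℝ (Fin n)) := F.filter (fun x => ρ ≤ dist x c₀) with hS
    have hSF : S ⊆ F := Finset.filter_subset _ _
    have hSd : ∀ x ∈ S, dist x c₀ = ρ := fun x hx =>
      le_antisymm (hfle c₀ x (hSF hx)) (Finset.mem_filter.1 hx).2
    obtain ⟨y₁, hy₁F, hy₁⟩ := Finset.exists_mem_eq_sup' hne (fun x => dist x c₀)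
    have hSne : S.Nonempty := ⟨y₁, Finset.mem_filter.2 ⟨hy₁F, le_of_eq hy₁⟩⟩
    have hc₀hull : c₀ ∈ convexHull ℝ (S : Set (EuclideanSpace ℝ (Fin n))) := by
      by_contra hc
      obtain ⟨fl, u, hfu, hus⟩ := geometric_hahn_banach_point_closed
        (convex_convexHull ℝ _) ((S.finite_toSet.isCompact_convexHull (𝕜 := ℝ)).isClosed) hc
      set v : EuclideanSpace ℝ (Fin n) := (InnerProductSpace.toDual ℝ (EuclideanSpace ℝ (Fin n))).symm fl with hv
      have hvap : ∀ x : EuclideanSpace ℝ (Fin n), ⟪v, x⟫ = fl x := fun x => InnerProductSpace.toDual_symm_apply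
      set β := u - fl c₀ with hβdef
      have hβ : 0 < β := sub_pos.2 hfu
      have hvS : ∀ x ∈ S, β ≤ ⟪v, x - c₀⟫ := by
        intro x hx
        have h := hus x (subset_convexHull ℝ _ (Finset.mem_coe.2 hx))
        rw [inner_sub_right, hvap, hvap]
        linarith
      have hv0 : v ≠ 0 := by
        rintro h
        obtain ⟨x, hx⟩ := hSne
        have h2 := hvS x hx
        rw [h, inner_zero_left] at h2
        linarith
      set N := ‖v‖^2 with hN
      have hN0 : 0 < N := pow_pos (norm_pos_iff.2 hv0) 2
      have hgap : ∃ γ > 0, ∀ x ∈ F \ S, dist x c₀ ≤ ρ - γ := by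
        by_cases hT : (F \ S).Nonempty
        · refine ⟨ρ - (F \ S).sup' hT (fun x => dist x c₀), ?_, ?_⟩
          · have hlt : (F \ S).sup' hT (fun x => dist x c₀) < ρ := by
              rw [Finset.sup'_lt_iff]
              intro x hx
              obtain ⟨hxF, hxS⟩ := Finset.mem_sdiff.1 hx
              by_contra hge
              exact hxS (Finset.mem_filter.2 ⟨hxF, le_of_not_gt hge⟩)
            linarith
          · intro x hx
            have := Finset.le_sup' (fun x => dist x c₀) hx
            linarith
        · exact ⟨1, one_pos, fun x hx => absurd ⟨x, hx⟩ hT⟩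
      obtain ⟨γ, hγ0, hγ⟩ := hgap
      set ε := min (β/N) (γ/(‖v‖+1)) with hε
      have hε0 : 0 < ε := lt_min (div_pos hβ hN0) (div_pos hγ0 (by positivity))
      have hεN : ε*N ≤ β := by
        have := min_le_left (β/N) (γ/(‖v‖+1))
        calc ε*N ≤ (β/N)*N := mul_le_mul_of_nonneg_right this hN0.le
          _ = β := div_mul_cancel₀ β hN0.ne'
      have hεv : ε*‖v‖ < γ := by
        have h1 : ε ≤ γ/(‖v‖+1) := min_le_right _ _
        have h2 : ε*‖v‖ ≤ (γ/(‖v‖+1))*‖v‖ := mul_le_mul_of_nonneg_right h1 (norm_nonneg v)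
        have h3 : (γ/(‖v‖+1))*‖v‖ < γ := by
          rw [div_mul_eq_mul_div, div_lt_iff₀ (by positivity)]
          nlinarith [norm_nonneg v]
        linarith
      have hlt : ∀ x ∈ F, dist x (c₀ + ε • v) < ρ := by
        intro x hxF
        by_cases hxS : x ∈ S
        · have hd2 : dist x (c₀ + ε • v) ^2
              = dist x c₀^2 - 2*(ε*⟪x - c₀, v⟫) + ε^2*N := by
            rw [dist_eq_norm, show x - (c₀ + ε • v) = (x - c₀) - ε • v by abel,
              norm_sub_sq_real, real_inner_smul_right, norm_smul]
            rw [dist_eq_norm, hN]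
            simp [abs_of_pos hε0]
            ring
          have hib : β ≤ ⟪x - c₀, v⟫ := by
            rw [real_inner_comm]; exact hvS x hxS
          have hd3 : dist x (c₀ + ε • v) ^2 ≤ ρ^2 - 2*(ε*β) + ε*β := by
            rw [hd2, hSd x hxS]
            have h4 : ε*β ≤ ε*⟪x - c₀, v⟫ := mul_le_mul_of_nonneg_left hib hε0.le
            have h5 : ε^2*N ≤ ε*β := by
              have : ε*(ε*N) ≤ ε*β := mul_le_mul_of_nonneg_left hεN hε0.le
              calc ε^2*N = ε*(ε*N) := by ring
                _ ≤ ε*β := this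
            linarith
          have : dist x (c₀ + ε • v) ^2 < ρ^2 := by nlinarith [mul_pos hε0 hβ]
          exact lt_of_pow_lt_pow_left₀ 2 hρ0 this
        · have h1 := hγ x (Finset.mem_sdiff.2 ⟨hxF, hxS⟩)
          have h2 : dist c₀ (c₀ + ε • v) = ε*‖v‖ := by
            rw [dist_eq_norm]
            simp [norm_smul, abs_of_pos hε0]
          calc dist x (c₀ + ε • v) ≤ dist x c₀ + dist c₀ (c₀ + ε • v) := dist_triangle _ _ _
            _ = dist x c₀ + ε*‖v‖ := by rw [h2]
            _ < (ρ - γ) + γ := by linarith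
            _ = ρ := by ring
      have hcon : f (c₀ + ε • v) < ρ := by
        rw [hf]
        exact (Finset.sup'_lt_iff hne).2 hlt
      exact absurd (hglob _) (not_le.2 hcon)
    obtain ⟨wt, hwt0, hwt1, hwtc⟩ := Finset.mem_convexHull'.1 hc₀hull
    obtain ⟨y₀, hy₀S⟩ := hSne
    have hz : ∑ y ∈ S, wt y • (y - c₀) = 0 := by
      have : ∑ y ∈ S, wt y • (y - c₀) = (∑ y ∈ S, wt y • y) - (∑ y ∈ S, wt y) • c₀ := by
        rw [Finset.sum_smul, ← Finset.sum_sub_distrib]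
        exact Finset.sum_congr rfl fun y _ => smul_sub _ _ _
      rw [this, hwtc, hwt1, one_smul, sub_self]
    have hkey : ∑ y ∈ S, wt y * dist y₀ y ^2 = 2*ρ^2 := by
      have hterm : ∀ y ∈ S, wt y * dist y₀ y ^2
          = wt y * (2*ρ^2) - 2*(wt y * ⟪y₀ - c₀, y - c₀⟫) := by
        intro y hy
        have h1 : dist y₀ y ^2 = ρ^2 - 2*⟪y₀ - c₀, y - c₀⟫ + ρ^2 := by
          rw [dist_eq_norm, show y₀ - y = (y₀ - c₀) - (y - c₀) by abel, norm_sub_sq_real,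
            ← dist_eq_norm y₀ c₀, ← dist_eq_norm y c₀, hSd y₀ hy₀S, hSd y hy]
        rw [h1]; ring
      calc ∑ y ∈ S, wt y * dist y₀ y ^2
          = ∑ y ∈ S, (wt y * (2*ρ^2) - 2*(wt y * ⟪y₀ - c₀, y - c₀⟫)) :=
            Finset.sum_congr rfl hterm
        _ = (∑ y ∈ S, wt y) * (2*ρ^2) - 2*(∑ y ∈ S, wt y * ⟪y₀ - c₀, y - c₀⟫) := by
            rw [Finset.sum_sub_distrib, ← Finset.sum_mul, Finset.mul_sum]
        _ = (2*ρ^2) - 2*⟪y₀ - c₀, ∑ y ∈ S, wt y • (y - c₀)⟫ := by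
            rw [hwt1, one_mul, inner_sum]
            congr 1
            congr 1
            exact Finset.sum_congr rfl fun y _ => (real_inner_smul_right _ _ _).symm
        _ = 2*ρ^2 := by rw [hz, inner_zero_right]; ring
    have hbound : ∑ y ∈ S, wt y * dist y₀ y ^2 ≤ D^2 := by
      calc ∑ y ∈ S, wt y * dist y₀ y ^2 ≤ ∑ y ∈ S, wt y * D^2 := by
            refine Finset.sum_le_sum fun y hy => mul_le_mul_of_nonneg_left ?_ (hwt0 y hy)
            exact pow_le_pow_left₀ dist_nonneg (hD y₀ (hSF hy₀S) y (hSF hy)) 2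
        _ = D^2 := by rw [← Finset.sum_mul, hwt1, one_mul]
    linarith
  exact ⟨c₀, fun x hx => le_trans (pow_le_pow_left₀ dist_nonneg (hfle c₀ x hx) 2) hρ2⟩


lemma dist_sq_sum {n : ℕ} (x y : EuclideanSpace ℝ (Fin n)) :
    dist x y ^ 2 = ∑ i, (x i - y i)^2 := by
  rw [EuclideanSpace.dist_eq, Real.sq_sqrt (Finset.sum_nonneg fun i _ => sq_nonneg _)]
  exact Finset.sum_congr rfl fun i _ => by rw [Real.dist_eq, sq_abs]

lemma ip_eq {n : ℕ} (X Y c : EuclideanSpace ℝ (Fin n)) :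
    ∑ i, (X i - c i)*(Y i - c i) = (dist X c^2 + dist Y c^2 - dist X Y^2)/2 := by
  have h1 := dist_sq_sum X c
  have h2 := dist_sq_sum Y c
  have h3 := dist_sq_sum X Y
  have h4 : ∑ i, (X i - Y i)^2
      = ∑ i, ((X i - c i)^2 - 2*((X i - c i)*(Y i - c i)) + (Y i - c i)^2) :=
    Finset.sum_congr rfl fun i _ => by ring
  rw [Finset.sum_add_distrib, Finset.sum_sub_distrib, ← Finset.mul_sum] at h4
  have h5 := h3.trans h4
  linarith


set_option maxHeartbeats 1000000 in
theorem stmt7 (p q s : Euc 2) (hncol : ¬ Collinear ℝ ({p, q, s} : Set (Euc 2)))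
    (hobtuse : EuclideanGeometry.angle p q s > 3 * Real.pi / 4) :
    ¬ DiameterRamsey ({p, q, s} : Set (Euc 2)) := by
  intro hDR
  classical
  set a := dist q s with ha'
  set b := dist p s with hb'
  set c := dist p q with hc'
  have hqs : q ≠ s := by
    rintro rfl
    exact hncol (Collinear.subset (by intro x hx; simpa using hx)
      (collinear_pair ℝ p q))
  have hpq : p ≠ q := by
    rintro rfl
    exact hncol (Collinear.subset (by intro x hx; simpa using hx)
      (collinear_pair ℝ p s))
  have ha0 : 0 < a := dist_pos.2 hqs
  have hc0 : 0 < c := dist_pos.2 hpq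
  have hb0 : 0 ≤ b := dist_nonneg
  have hpi := Real.pi_pos
  have hcos : Real.cos (EuclideanGeometry.angle p q s) < Real.cos (3*Real.pi/4) := by
    apply Real.strictAntiOn_cos
    · constructor
      · positivity
      · linarith
    · exact ⟨EuclideanGeometry.angle_nonneg _ _ _, EuclideanGeometry.angle_le_pi _ _ _⟩
    · linarith [hobtuse]
  have hcos34 : Real.cos (3*Real.pi/4) = -(Real.sqrt 2/2) := by
    rw [show 3*Real.pi/4 = Real.pi - Real.pi/4 by ring, Real.cos_pi_sub, Real.cos_pi_div_four]
  have hannorm : ‖p - q‖ = c := by rw [hc', dist_eq_norm]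
  have hannorm2 : ‖s - q‖ = a := by rw [ha', dist_comm, dist_eq_norm]
  have hinner : ⟪p - q, s - q⟫ = Real.cos (EuclideanGeometry.angle p q s) * (c * a) := by
    have h := InnerProductGeometry.cos_angle (p - q) (s - q)
    have heq : EuclideanGeometry.angle p q s = InnerProductGeometry.angle (p - q) (s - q) := rfl
    rw [heq, h, hannorm, hannorm2]
    field_simp
  have hip : ⟪p - q, s - q⟫ < -(Real.sqrt 2/2) * (c * a) := by
    rw [hinner]
    exact mul_lt_mul_of_pos_right (by rw [← hcos34]; exact hcos) (by positivity)
  have hbsq : b^2 = c^2 - 2*⟪p - q, s - q⟫ + a^2 := by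
    rw [hb', dist_eq_norm, show p - s = (p - q) - (s - q) by abel, norm_sub_sq_real,
      hannorm, hannorm2]
  have hK : a^2 + c^2 - b^2 < -(Real.sqrt 2 * (a*c)) := by
    have h2 : a^2 + c^2 - b^2 = 2*⟪p - q, s - q⟫ := by linarith [hbsq]
    have h3 : 2*⟪p - q, s - q⟫ < 2*(-(Real.sqrt 2/2) * (c * a)) := by linarith [hip]
    have h4 : 2*(-(Real.sqrt 2/2) * (c * a)) = -(Real.sqrt 2 * (a*c)) := by ring
    linarith
  have htri : b ≤ a + c := by
    have := dist_triangle p q s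
    rw [← hc', ← ha', ← hb'] at this
    linarith
  have hs2 : Real.sqrt 2 ^ 2 = 2 := Real.sq_sqrt (by norm_num)
  have hs2n : 0 < Real.sqrt 2 := Real.sqrt_pos.2 (by norm_num)
  have hsac : 0 < Real.sqrt 2 * (a*c) := by positivity
  have hKneg : a^2 + c^2 - b^2 < 0 := by linarith
  have ha2 : 0 < a^2 := pow_pos ha0 2
  have hc2 : 0 < c^2 := pow_pos hc0 2
  have hbpos : 0 < b := by
    have hb2 : 0^2 < b^2 := by simpa using by linarith
    exact lt_of_pow_lt_pow_left₀ 2 hb0 hb2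
  have hab : a ≤ b := (lt_of_pow_lt_pow_left₀ 2 hb0 (by linarith)).le
  have hcb : c ≤ b := (lt_of_pow_lt_pow_left₀ 2 hb0 (by linarith)).le
  have hK2 : 2*(a^2*c^2) < (a^2+c^2-b^2)^2 := by
    have h1 : Real.sqrt 2 * (a*c) < -(a^2+c^2-b^2) := by linarith
    have h2 : (Real.sqrt 2 * (a*c))^2 < (-(a^2+c^2-b^2))^2 :=
      pow_lt_pow_left₀ h1 hsac.le two_ne_zero
    have h3 : (Real.sqrt 2 * (a*c))^2 = 2*(a^2*c^2) := by
      have := hs2; nlinarith [hs2]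
    have h4 : (-(a^2+c^2-b^2))^2 = (a^2+c^2-b^2)^2 := by ring
    linarith
  have hK4 : (a^2+c^2-b^2)^2 ≤ 4*(a^2*c^2) := by
    have hb2 : b^2 ≤ (a+c)^2 := pow_le_pow_left₀ hb0 htri 2
    have h1 : 0 ≤ 2*(a*c) + (a^2+c^2-b^2) := by nlinarith [hb2]
    have h2 : 0 ≤ 2*(a*c) - (a^2+c^2-b^2) := by nlinarith [mul_pos ha0 hc0]
    nlinarith [mul_nonneg h1 h2]
  have hdiam : Metric.diam ({p, q, s} : Set (Euc 2)) = b := by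
    rw [Metric.diam_triple, ← hc', ← hb', ← ha', max_eq_right hcb, max_eq_left hab]
  set K2 := (a^2+c^2-b^2)^2 - 2*(a^2*c^2) with hK2def
  have hK2pos : 0 < K2 := by rw [hK2def]; linarith
  set d' := min (b^2) (K2/(32*b^2)) with hd'
  have hd'0 : 0 < d' := lt_min (by positivity) (by positivity)
  set r := ⌊b^2/2/d'⌋₊ + 1 with hr
  obtain ⟨n, B, hBfin, hBdiam, hB⟩ := hDR r (Nat.succ_pos _)
  by_cases hBne : B.Nonempty
  swap
  · obtain ⟨A', hA'B, ⟨f, hfiso, hfA⟩, -⟩ := hB (fun _ => ⟨0, Nat.succ_pos _⟩)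
    have hfp : f p ∈ A' := by
      rw [← hfA]; exact Set.mem_image_of_mem f (by simp)
    exact hBne ⟨f p, hA'B hfp⟩
  · have hFne : hBfin.toFinset.Nonempty := by
      rwa [Set.Finite.toFinset_nonempty]
    have hDD : ∀ x ∈ hBfin.toFinset, ∀ y ∈ hBfin.toFinset, dist x y ≤ b := by
      intro x hx y hy
      rw [Set.Finite.mem_toFinset] at hx hy
      have h := Metric.dist_le_diam_of_mem hBfin.isBounded hx hy
      rwa [hBdiam, hdiam] at h
    obtain ⟨c₀, hc₀⟩ := jung_weak hBfin.toFinset hFne b hDD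
    have hc₀' : ∀ x ∈ B, dist x c₀^2 ≤ b^2/2 := fun x hx =>
      hc₀ x (hBfin.mem_toFinset.2 hx)
    set χ : Euc n → Fin r := fun x =>
      ⟨min (⌊dist x c₀^2/d'⌋₊) (r-1), lt_of_le_of_lt (min_le_right _ _) (by omega)⟩ with hχ
    obtain ⟨A', hA'B, ⟨f, hfiso, hfA⟩, hmono⟩ := hB χ
    have hfp : f p ∈ A' := by rw [← hfA]; exact Set.mem_image_of_mem f (by simp)
    have hfq : f q ∈ A' := by rw [← hfA]; exact Set.mem_image_of_mem f (by simp)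
    have hfs : f s ∈ A' := by rw [← hfA]; exact Set.mem_image_of_mem f (by simp)
    set x1 := dist (f p) c₀^2 with hx1'
    set x2 := dist (f q) c₀^2 with hx2'
    set x3 := dist (f s) c₀^2 with hx3'
    have hx1b : x1 ≤ b^2/2 := hc₀' _ (hA'B hfp)
    have hx2b : x2 ≤ b^2/2 := hc₀' _ (hA'B hfq)
    have hx3b : x3 ≤ b^2/2 := hc₀' _ (hA'B hfs)
    -- color values are the floors
    have hfloor : ∀ X : Euc n, X ∈ A' → (⌊dist X c₀^2/d'⌋₊ : ℕ) ≤ r - 1 := by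
      intro X hX
      have h1 : dist X c₀^2/d' ≤ b^2/2/d' :=
        (div_le_div_iff_of_pos_right hd'0).2 (hc₀' _ (hA'B hX))
      have h2 := Nat.floor_le_floor h1
      omega
    have hval : ∀ X : Euc n, X ∈ A' → (χ X : ℕ) = ⌊dist X c₀^2/d'⌋₊ := by
      intro X hX
      show min (⌊dist X c₀^2/d'⌋₊) (r-1) = ⌊dist X c₀^2/d'⌋₊
      exact min_eq_left (hfloor X hX)
    have hdiff : ∀ X Y : Euc n, X ∈ A' → Y ∈ A' →
        dist X c₀^2 - dist Y c₀^2 ≤ d' := by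
      intro X Y hX hY
      have hXY : χ X = χ Y := hmono X hX Y hY
      have h1 : ⌊dist X c₀^2/d'⌋₊ = ⌊dist Y c₀^2/d'⌋₊ := by
        have := congrArg (Fin.val) hXY
        rwa [hval X hX, hval Y hY] at this
      have h2 : dist X c₀^2/d' < ⌊dist X c₀^2/d'⌋₊ + 1 := Nat.lt_floor_add_one _
      have h3 : (⌊dist Y c₀^2/d'⌋₊ : ℝ) ≤ dist Y c₀^2/d' := Nat.floor_le (by positivity)
      rw [h1] at h2
      have h4 : dist X c₀^2 < (⌊dist Y c₀^2/d'⌋₊ + 1 : ℝ) * d' := (div_lt_iff₀ hd'0).1 h2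
      have h5 : (⌊dist Y c₀^2/d'⌋₊ : ℝ) * d' ≤ dist Y c₀^2 := (le_div_iff₀ hd'0).1 h3
      linarith
    have he1b := hdiff (f p) (f s) hfp hfs
    have he1a := hdiff (f s) (f p) hfs hfp
    have he2b := hdiff (f q) (f s) hfq hfs
    have he2a := hdiff (f s) (f q) hfs hfq
    -- distances of the copy
    have hdpq : dist (f p) (f q) = c := by rw [hfiso.dist_eq, hc']
    have hdps : dist (f p) (f s) = b := by rw [hfiso.dist_eq, hb']
    have hdqs : dist (f q) (f s) = a := by rw [hfiso.dist_eq, ha']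
    -- Gram matrix
    set u : Fin n → ℝ := fun i => f p i - c₀ i with hu
    set v : Fin n → ℝ := fun i => f q i - c₀ i with hv
    set w : Fin n → ℝ := fun i => f s i - c₀ i with hw
    have hg := gram3 u v w
    have huu : ∑ i, u i * u i = x1 := by
      rw [hx1', dist_sq_sum]
      exact Finset.sum_congr rfl fun i _ => by simp [hu]; ring
    have hvv : ∑ i, v i * v i = x2 := by
      rw [hx2', dist_sq_sum]
      exact Finset.sum_congr rfl fun i _ => by simp [hv]; ring
    have hww : ∑ i, w i * w i = x3 := by
      rw [hx3', dist_sq_sum]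
      exact Finset.sum_congr rfl fun i _ => by simp [hw]; ring
    have huv : ∑ i, u i * v i = (x1 + x2 - c^2)/2 := by
      have h := ip_eq (f p) (f q) c₀
      rw [hdpq] at h
      rw [← hx1', ← hx2'] at h
      exact h
    have huw : ∑ i, u i * w i = (x1 + x3 - b^2)/2 := by
      have h := ip_eq (f p) (f s) c₀
      rw [hdps] at h
      rw [← hx1', ← hx3'] at h
      exact h
    have hvw : ∑ i, v i * w i = (x2 + x3 - a^2)/2 := by
      have h := ip_eq (f q) (f s) c₀
      rw [hdqs] at h
      rw [← hx2', ← hx3'] at h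
      exact h
    rw [huu, hvv, hww, huv, huw, hvw] at hg
    have hcore := core_neg (a^2) (b^2) (c^2) x1 x2 x3 d' (a^2+c^2-b^2)
      (by positivity) (by positivity) (by positivity) rfl hKneg hK2 hK4
      (by rw [hx3']; positivity) hx3b (by linarith) (by linarith) (by linarith) (by linarith)
      (min_le_left _ _)
      (by
        have h := min_le_right (b^2) (K2/(32*b^2))
        rw [← hd'] at h
        have h2 : d' * (32*b^2) ≤ K2 := by
          rw [← le_div_iff₀ (by positivity)]
          exact h
        rw [hK2def] at h2
        linarith)
    linarith [hg, hcore]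
end
end

section
/- For every d ≥ 2, the d-simplex constructed with d vertices forming a regular (d−1)-simplex of side 1 on the boundary of a (d−1)-ball and an apex at distance √(1 − 1/√d + O(δ)) from each of them (as δ → 0⁺) is ε-almost regular for any ε > √d/C(d+1,2) when δ is sufficiently small; that is, its almost-regularity defect (1/C(d+1,2))·Σ_{i<j}(diam² − ‖pᵢ−pⱼ‖²) tends to √d/C(d+1,2)·diam² as δ → 0. -/
open Metric

noncomputable section

noncomputable def defect {d : ℕ} (p : Fin (d + 1) → Euc d) : ℝ :=
  (1 / ((d + 1).choose 2 : ℝ)) *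
    ∑ ij ∈ Finset.univ.filter (fun ij : Fin (d + 1) × Fin (d + 1) => ij.1 < ij.2),
      (Metric.diam (Set.range p) ^ 2 - dist (p ij.1) (p ij.2) ^ 2)

lemma key (d : ℕ) (hd : 2 ≤ d) (i : Fin d) (δ : ℝ) (hδ : 0 < δ)
    (q : Fin (d + 1) → Euc d)
    (h1 : ∀ k l : Fin d, k ≠ l → dist (q k.castSucc) (q l.castSucc) = 1)
    (h2 : ∀ k : Fin d, (q k.castSucc) i = Real.sqrt (1 / (2 * d) + δ) ∧
        ‖q k.castSucc‖ = Real.sqrt (1 / 2 + δ))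
    (h3 : q (Fin.last d) = EuclideanSpace.single i (Real.sqrt (1 / 2 + δ))) :
    Metric.diam (Set.range q) = 1 ∧
    defect q = (1 / ((d + 1).choose 2 : ℝ)) *
      (d * (2 * (Real.sqrt (1 / 2 + δ) * Real.sqrt (1 / (2 * d) + δ)) - 2 * δ)) := by
  have hdpos : (0 : ℝ) < d := by exact_mod_cast Nat.lt_of_lt_of_le (by norm_num) hd
  set r := Real.sqrt (1 / 2 + δ) with hr
  set a := Real.sqrt (1 / (2 * d) + δ) with ha
  have hr0 : 0 ≤ r := Real.sqrt_nonneg _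
  have ha0 : 0 ≤ a := Real.sqrt_nonneg _
  have hr2 : r ^ 2 = 1 / 2 + δ := Real.sq_sqrt (by linarith)
  have ha2 : a ^ 2 = 1 / (2 * d) + δ := Real.sq_sqrt (by positivity)
  have hra : δ < r * a := by
    have hsq : δ ^ 2 < (r * a) ^ 2 := by
      rw [mul_pow, hr2, ha2]
      have h2d : (0:ℝ) < 1 / (2 * d) := by positivity
      nlinarith
    exact lt_of_pow_lt_pow_left₀ 2 (mul_nonneg hr0 ha0) hsq
  -- apex distances
  have hapex : ∀ k : Fin d, dist (q k.castSucc) (q (Fin.last d)) ^ 2 = 1 + 2 * δ - 2 * (r * a) := by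
    intro k
    rw [h3, dist_eq_norm, norm_sub_sq_real, EuclideanSpace.inner_single_right,
      EuclideanSpace.norm_single, (h2 k).2, (h2 k).1]
    simp only [RCLike.star_def, starRingEnd_apply, star_trivial, Real.norm_eq_abs,
      abs_of_nonneg hr0]
    rw [hr2]
    ring
  have hapexle : ∀ k : Fin d, dist (q k.castSucc) (q (Fin.last d)) ≤ 1 := by
    intro k
    nlinarith [hapex k, dist_nonneg (x := q k.castSucc) (y := q (Fin.last d))]
  -- diameter
  have hdiam : Metric.diam (Set.range q) = 1 := by
    apply le_antisymm
    · apply Metric.diam_le_of_forall_dist_le zero_le_one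
      rintro x ⟨u, rfl⟩ y ⟨v, rfl⟩
      induction u using Fin.lastCases with
      | last =>
        induction v using Fin.lastCases with
        | last => simp
        | cast v => rw [dist_comm]; exact hapexle v
      | cast u =>
        induction v using Fin.lastCases with
        | last => exact hapexle u
        | cast v =>
          rcases eq_or_ne u v with rfl | huv
          · simp
          · exact le_of_eq (h1 u v huv)
    · have hb : Bornology.IsBounded (Set.range q) := (Set.finite_range q).isBounded
      have h01 : (⟨0, by omega⟩ : Fin d) ≠ ⟨1, by omega⟩ := by
        intro h; exact absurd (congrArg Fin.val h) (by simp)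
      calc (1:ℝ) = dist (q (Fin.castSucc ⟨0, by omega⟩)) (q (Fin.castSucc ⟨1, by omega⟩)) :=
            (h1 _ _ h01).symm
        _ ≤ _ := Metric.dist_le_diam_of_mem hb ⟨_, rfl⟩ ⟨_, rfl⟩
  refine ⟨hdiam, ?_⟩
  rw [defect, hdiam]
  congr 1
  have hterm : ∀ ij ∈ Finset.univ.filter (fun ij : Fin (d + 1) × Fin (d + 1) => ij.1 < ij.2),
      ((1:ℝ) ^ 2 - dist (q ij.1) (q ij.2) ^ 2) =
      if ij.2 = Fin.last d then (2 * (r * a) - 2 * δ) else 0 := by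
    rintro ⟨x, y⟩ hxy
    simp only [Finset.mem_filter, Finset.mem_univ, true_and] at hxy
    by_cases hy : y = Fin.last d
    · have hx : x ≠ Fin.last d := by rw [hy] at hxy; exact ne_of_lt hxy
      simp only [hy, if_pos]
      rw [← Fin.castSucc_castPred x hx, hapex]
      ring
    · rw [if_neg hy]
      have hylt : y < Fin.last d := Fin.lt_last_iff_ne_last.mpr hy
      have hx : x ≠ Fin.last d := Fin.lt_last_iff_ne_last.mp (hxy.trans hylt)
      have hne : x.castPred hx ≠ y.castPred hy := by
        intro h
        apply absurd (congrArg Fin.castSucc h)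
        rw [Fin.castSucc_castPred, Fin.castSucc_castPred]
        exact ne_of_lt hxy
      have := h1 _ _ hne
      rw [Fin.castSucc_castPred, Fin.castSucc_castPred] at this
      rw [this]; ring
  rw [Finset.sum_congr rfl hterm, Finset.sum_ite, Finset.sum_const, Finset.sum_const_zero,
    add_zero, Finset.filter_filter]
  have hset : Finset.univ.filter (fun ij : Fin (d + 1) × Fin (d + 1) =>
      ij.1 < ij.2 ∧ ij.2 = Fin.last d) =
      (Finset.univ.filter (fun x : Fin (d + 1) => x < Fin.last d)) ×ˢ {Fin.last d} := by
    ext ⟨x, y⟩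
    simp only [Finset.mem_filter, Finset.mem_univ, true_and, Finset.mem_product,
      Finset.mem_singleton]
    constructor
    · rintro ⟨h, hy⟩; subst hy; exact ⟨h, rfl⟩
    · rintro ⟨h, hy⟩; subst hy; exact ⟨h, rfl⟩
  rw [hset, Finset.card_product, Finset.card_singleton]
  have hcard : (Finset.univ.filter (fun x : Fin (d + 1) => x < Fin.last d)).card = d := by
    have : Finset.univ.filter (fun x : Fin (d + 1) => x < Fin.last d) =
        Finset.univ.erase (Fin.last d) := by
      ext x
      simp [Fin.lt_last_iff_ne_last]
    rw [this, Finset.card_erase_of_mem (Finset.mem_univ _), Finset.card_univ,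
      Fintype.card_fin]
    simp
  rw [hcard, mul_one, nsmul_eq_mul]

lemma limit_val (d : ℕ) (hd : 2 ≤ d) :
    (d : ℝ) * (2 * (Real.sqrt (1 / 2 + 0) * Real.sqrt (1 / (2 * d) + 0)) - 2 * 0) =
      Real.sqrt d := by
  have hdpos : (0 : ℝ) < d := by exact_mod_cast Nat.lt_of_lt_of_le (by norm_num) hd
  have hs : 0 < Real.sqrt d := Real.sqrt_pos.mpr hdpos
  rw [add_zero, add_zero, ← Real.sqrt_mul (by norm_num)]
  have h1 : (1 / 2 : ℝ) * (1 / (2 * d)) = ((4 : ℝ) * d)⁻¹ := by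
    field_simp; ring
  have h4 : Real.sqrt (4 * d) = 2 * Real.sqrt d := by
    rw [show ((4:ℝ)) = 2 ^ 2 by norm_num, Real.sqrt_mul (by positivity), Real.sqrt_sq (by norm_num)]
  rw [h1, Real.sqrt_inv, h4]
  rw [show (d : ℝ) * (2 * (2 * Real.sqrt d)⁻¹ - 2 * 0) = (d : ℝ) / Real.sqrt d by
    rw [mul_zero, sub_zero]; field_simp]
  exact Real.div_sqrt

theorem stmt19 (d : ℕ) (hd : 2 ≤ d) (i : Fin d) (hi : (i : ℕ) = d - 1)
    (p : ℝ → Fin (d + 1) → Euc d)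
    (hp : ∀ δ : ℝ, 0 < δ →
      (∀ k l : Fin d, k ≠ l → dist (p δ k.castSucc) (p δ l.castSucc) = 1) ∧
      (∀ k : Fin d, (p δ k.castSucc) i = Real.sqrt (1 / (2 * d) + δ) ∧
        ‖p δ k.castSucc‖ = Real.sqrt (1 / 2 + δ)) ∧
      p δ (Fin.last d) = EuclideanSpace.single i (Real.sqrt (1 / 2 + δ))) :
    Filter.Tendsto (fun δ => defect (p δ)) (nhdsWithin 0 (Set.Ioi 0))
      (nhds (Real.sqrt d / ((d + 1).choose 2 : ℝ))) ∧
    ∀ ε : ℝ, ε > Real.sqrt d / ((d + 1).choose 2 : ℝ) →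
      ∃ δ₁ : ℝ, 0 < δ₁ ∧ ∀ δ : ℝ, 0 < δ → δ < δ₁ →
        defect (p δ) ≤ ε * Metric.diam (Set.range (p δ)) ^ 2 := by
  set C : ℝ := ((d + 1).choose 2 : ℝ) with hCdef
  set g : ℝ → ℝ := fun δ => (1 / C) *
    ((d : ℝ) * (2 * (Real.sqrt (1 / 2 + δ) * Real.sqrt (1 / (2 * d) + δ)) - 2 * δ)) with hgdef
  have hkey : ∀ δ : ℝ, 0 < δ →
      Metric.diam (Set.range (p δ)) = 1 ∧ defect (p δ) = g δ := by
    intro δ hδ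
    obtain ⟨h1, h2, h3⟩ := hp δ hδ
    exact key d hd i δ hδ (p δ) h1 h2 h3
  have hg : Continuous g := by
    apply continuous_const.mul
    apply continuous_const.mul
    apply Continuous.sub
    · exact continuous_const.mul (((continuous_const.add continuous_id).sqrt).mul
        ((continuous_const.add continuous_id).sqrt))
    · exact continuous_const.mul continuous_id
  have hg0 : g 0 = Real.sqrt d / C := by
    rw [hgdef]
    simp only
    rw [limit_val d hd, one_div_mul_eq_div]
  have ht : Filter.Tendsto g (nhdsWithin 0 (Set.Ioi 0)) (nhds (Real.sqrt d / C)) := by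
    rw [← hg0]
    exact (hg.tendsto 0).mono_left nhdsWithin_le_nhds
  have heq : g =ᶠ[nhdsWithin 0 (Set.Ioi 0)] fun δ => defect (p δ) := by
    filter_upwards [self_mem_nhdsWithin] with δ hδ
    exact ((hkey δ hδ).2).symm
  have htd : Filter.Tendsto (fun δ => defect (p δ)) (nhdsWithin 0 (Set.Ioi 0))
      (nhds (Real.sqrt d / C)) := ht.congr' heq
  refine ⟨htd, ?_⟩
  intro ε hε
  have hev : ∀ᶠ δ in nhdsWithin 0 (Set.Ioi 0), defect (p δ) < ε :=
    htd.eventually_lt_const hε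
  rw [eventually_nhdsWithin_iff, Metric.eventually_nhds_iff] at hev
  obtain ⟨δ₁, hδ₁, h⟩ := hev
  refine ⟨δ₁, hδ₁, fun δ hδ hδ' => ?_⟩
  have hlt : defect (p δ) < ε := by
    apply h _ hδ
    rw [Real.dist_eq, sub_zero, abs_of_pos hδ]
    exact hδ'
  rw [(hkey δ hδ).1]
  nlinarith
end
end
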